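/- Let Y > 0 almost surely, W a random vector, φ ≥ 0 measurable, 0 < s̃ ≤ s, and let L : ℝ → ℝ be nondecreasing and bounded. Define X = Y·1_{Y ≤ s} + sφ(W)·1_{Y > s}, X* = Y·1_{sφ(W) ≤ s̃} + sφ(W)·1_{sφ(W) > s̃}, and E₋ = {Y ≤ s and sφ(W) > s̃}. Then for every real number a, E[L(X*/Y − a)] ≥ E[L(X/Y − a)] − (L(1 − a) − L(−a))·P(E₋). -/

import Mathlib

open MeasureTheory

/-- For a nondecreasing bounded utility `L` and every penalty level `a`,
the expected utility of the compensation ratio of the index-triggered contract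
`X* = Y·1_{sφ(W) ≤ s̃} + sφ(W)·1_{sφ(W) > s̃}` is at least that of the hybrid contract
`X = Y·1_{Y ≤ s} + sφ(W)·1_{Y > s}` minus `(L(1 − a) − L(−a))·P(E₋)`, where
`E₋ = {Y ≤ s and sφ(W) > s̃}`. -/
theorem statement1 {Ω D : Type*} [MeasurableSpace Ω] [MeasurableSpace D]
    (μ : Measure Ω) [IsProbabilityMeasure μ]
    (Y : Ω → ℝ) (W : Ω → D) (φ : D → ℝ)
    (hY : Measurable Y) (hW : Measurable W) (hφ : Measurable φ)
    (hYpos : ∀ᵐ ω ∂μ, 0 < Y ω) (hφpos : ∀ x, 0 ≤ φ x)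
    (s stilde : ℝ) (hst : 0 < stilde) (hss : stilde ≤ s)
    (L : ℝ → ℝ) (hLmono : Monotone L) (hLbdd : ∃ M, ∀ x, |L x| ≤ M)
    (a : ℝ) :
    ∫ ω, L ((if s * φ (W ω) ≤ stilde then Y ω else s * φ (W ω)) / Y ω - a) ∂μ
      ≥ (∫ ω, L ((if Y ω ≤ s then Y ω else s * φ (W ω)) / Y ω - a) ∂μ)
        - (L (1 - a) - L (-a)) *
            (μ {ω | Y ω ≤ s ∧ stilde < s * φ (W ω)}).toReal := by
  obtain ⟨M, hM⟩ := hLbdd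
  set c : ℝ := L (1 - a) - L (-a) with hc
  set E : Set Ω := {ω | Y ω ≤ s ∧ stilde < s * φ (W ω)} with hE
  have hsφ : Measurable (fun ω => s * φ (W ω)) := measurable_const.mul (hφ.comp hW)
  have hEmeas : MeasurableSet E :=
    (measurableSet_le hY measurable_const).inter (measurableSet_lt measurable_const hsφ)
  have hLmeas : Measurable L := hLmono.measurable
  set f : Ω → ℝ := fun ω => L ((if s * φ (W ω) ≤ stilde then Y ω else s * φ (W ω)) / Y ω - a)
    with hf
  set g : Ω → ℝ := fun ω => L ((if Y ω ≤ s then Y ω else s * φ (W ω)) / Y ω - a) with hg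
  have hfm : Measurable f :=
    hLmeas.comp (((Measurable.ite (measurableSet_le hsφ measurable_const) hY hsφ).div hY).sub
      measurable_const)
  have hgm : Measurable g :=
    hLmeas.comp (((Measurable.ite (measurableSet_le hY measurable_const) hY hsφ).div hY).sub
      measurable_const)
  have hfint : Integrable f μ := by
    refine (integrable_const M).mono' hfm.aestronglyMeasurable (Filter.Eventually.of_forall ?_)
    intro ω; simpa using hM _
  have hgint : Integrable g μ := by
    refine (integrable_const M).mono' hgm.aestronglyMeasurable (Filter.Eventually.of_forall ?_)
    intro ω; simpa using hM _
  have hind : Integrable (E.indicator fun _ => c) μ :=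
    (integrable_const c).indicator hEmeas
  have hle : ∀ᵐ ω ∂μ, g ω - E.indicator (fun _ => c) ω ≤ f ω := by
    filter_upwards [hYpos] with ω hωY
    have hYne : Y ω ≠ 0 := ne_of_gt hωY
    by_cases hmem : ω ∈ E
    · obtain ⟨h1, h2⟩ := hmem
      have hgω : g ω = L (1 - a) := by
        simp only [hg, if_pos h1, div_self hYne]
      have hfω : f ω = L (s * φ (W ω) / Y ω - a) := by
        simp only [hf, if_neg (not_le.mpr h2)]
      have hnn : (0:ℝ) ≤ s * φ (W ω) / Y ω :=
        div_nonneg (le_of_lt (hst.trans h2)) hωY.le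
      have : L (-a) ≤ f ω := by
        rw [hfω]; exact hLmono (by linarith)
      rw [Set.indicator_of_mem (show ω ∈ E from ⟨h1, h2⟩), hgω]
      linarith
    · rw [Set.indicator_of_notMem hmem, sub_zero]
      by_cases hφs : s * φ (W ω) ≤ stilde
      · have hfω : f ω = L (1 - a) := by
          simp only [hf, if_pos hφs, div_self hYne]
        by_cases hYs : Y ω ≤ s
        · simp only [hg, if_pos hYs, div_self hYne, hfω, le_refl]
        · have hYgt : s < Y ω := not_le.mp hYs
          have hgω : g ω = L (s * φ (W ω) / Y ω - a) := by
            simp only [hg, if_neg hYs]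
          have : s * φ (W ω) / Y ω ≤ 1 := by
            rw [div_le_one hωY]
            linarith
          rw [hgω, hfω]
          exact hLmono (by linarith)
      · have hYs : ¬ Y ω ≤ s := fun h => hmem ⟨h, not_le.mp hφs⟩
        simp only [hf, hg, if_neg hφs, if_neg hYs, le_refl]
  have hsubint : Integrable (fun ω => g ω - E.indicator (fun _ => c) ω) μ := hgint.sub hind
  have key : ∫ ω, (g ω - E.indicator (fun _ => c) ω) ∂μ ≤ ∫ ω, f ω ∂μ :=
    integral_mono_ae hsubint hfint hle
  have hint_eq : ∫ ω, (g ω - E.indicator (fun _ => c) ω) ∂μ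
      = (∫ ω, g ω ∂μ) - c * (μ E).toReal := by
    rw [integral_sub hgint hind, integral_indicator_const c hEmeas]
    simp [smul_eq_mul, mul_comm, Measure.real]
  rw [hint_eq] at key
  exact key
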